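/- arXiv:math/0203042 — 6 statements merged into one kernel-verified Lean document; each statement's English description precedes it below -/
import Mathlib

section
/- Let F be the free group on generators x₁, …, x_m (m ≥ 1) and let ℤ[F] be its integral group ring. Then every element f ∈ F, viewed as an element of ℤ[F], admits a unique expansion f = 1 + Σ_{j=1}^m f_j · (x_j − 1) with f₁, …, f_m ∈ ℤ[F]. (The element f_j is by definition the j-th Fox derivative ∂f/∂x_j.) -/
open MonoidAlgebra

namespace FoxAux

variable (m : ℕ)

abbrev F := FreeGroup (Fin m)
abbrev R := MonoidAlgebra ℤ (FreeGroup (Fin m))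
abbrev V := Fin m → MonoidAlgebra ℤ (FreeGroup (Fin m))

noncomputable def actAdd (g : F m) : V m ≃+ V m where
  toFun v j := of ℤ (F m) g * v j
  invFun v j := of ℤ (F m) g⁻¹ * v j
  left_inv v := by
    funext j
    simp [← mul_assoc, ← map_mul, ← MonoidAlgebra.one_def]
  right_inv v := by
    funext j
    simp [← mul_assoc, ← map_mul, ← MonoidAlgebra.one_def]
  map_add' v w := by funext j; simp [mul_add]

noncomputable def phi : F m →* MulAut (Multiplicative (V m)) where
  toFun g := AddEquiv.toMultiplicative (actAdd m g)
  map_one' := by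
    ext1 v
    show Multiplicative.ofAdd (actAdd m 1 (Multiplicative.toAdd v)) = v
    apply congrArg
    funext j
    simp [actAdd, ← MonoidAlgebra.one_def]
    rfl
  map_mul' g h := by
    ext1 v
    show Multiplicative.ofAdd (actAdd m (g * h) (Multiplicative.toAdd v)) =
      Multiplicative.ofAdd (actAdd m g (actAdd m h (Multiplicative.toAdd v)))
    apply congrArg
    funext j
    show of ℤ (F m) (g * h) * _ = of ℤ (F m) g * (of ℤ (F m) h * _)
    rw [map_mul, mul_assoc]

noncomputable def Phi : F m →* SemidirectProduct (Multiplicative (V m)) (F m) (phi m) :=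
  FreeGroup.lift fun i => ⟨Multiplicative.ofAdd (Pi.single i 1), FreeGroup.of i⟩

lemma Phi_right (f : F m) : (Phi m f).right = f := by
  have : (SemidirectProduct.rightHom.comp (Phi m)) = MonoidHom.id (F m) := by
    apply FreeGroup.ext_hom
    intro i
    simp [Phi, SemidirectProduct.rightHom]
  exact DFunLike.congr_fun this f

noncomputable def D (f : F m) : V m := Multiplicative.toAdd (Phi m f).left

lemma D_of (i : Fin m) : D m (FreeGroup.of i) = Pi.single i 1 := by
  simp [D, Phi]

lemma phi_apply (g : F m) (v : Multiplicative (V m)) :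
    (phi m g) v = Multiplicative.ofAdd (fun j => of ℤ (F m) g * Multiplicative.toAdd v j) :=
  rfl

lemma D_mul (u v : F m) :
    D m (u * v) = D m u + fun j => of ℤ (F m) u * D m v j := by
  unfold D
  rw [map_mul, SemidirectProduct.mul_left, Phi_right, phi_apply]
  rfl

noncomputable def Delta (j : Fin m) : R m →ₗ[ℤ] R m :=
  (Finsupp.lsum ℤ fun g => LinearMap.toSpanSingleton ℤ (R m) (D m g j)) ∘ₗ
    (MonoidAlgebra.coeffLinearEquiv ℤ).toLinearMap

lemma Delta_of (j : Fin m) (g : F m) : Delta m j (of ℤ (F m) g) = D m g j := by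
  show (Finsupp.lsum ℤ fun g => LinearMap.toSpanSingleton ℤ (R m) (D m g j))
      (Finsupp.single g 1) = D m g j
  rw [Finsupp.lsum_single, LinearMap.toSpanSingleton_apply, one_smul]

lemma Delta_mul (j i : Fin m) (a : R m) :
    Delta m j (a * (of ℤ (F m) (FreeGroup.of i) - 1)) = if i = j then a else 0 := by
  induction a using MonoidAlgebra.induction_on with
  | of g =>
    rw [mul_sub, mul_one, ← map_mul, map_sub, Delta_of, Delta_of, D_mul, D_of]
    by_cases h : i = j <;>
      simp [h, Pi.single_apply, eq_comm]
  | add a b ha hb =>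
    rw [add_mul, map_add, ha, hb]
    by_cases h : i = j <;> simp [h]
  | smul c a ha =>
    rw [smul_mul_assoc, map_smul, ha]
    by_cases h : i = j <;> simp [h]

end FoxAux

/-- Fox derivatives: every element `f` of the free group `F` on `m ≥ 1` generators,
viewed inside the group ring `ℤ[F]`, has a unique expansion
`f = 1 + ∑ⱼ fⱼ · (xⱼ - 1)` with `fⱼ ∈ ℤ[F]`. -/
theorem fox_derivative_expansion (m : ℕ) (hm : 1 ≤ m) (f : FreeGroup (Fin m)) :
    ∃! d : Fin m → MonoidAlgebra ℤ (FreeGroup (Fin m)),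
      (MonoidAlgebra.of ℤ (FreeGroup (Fin m)) f : MonoidAlgebra ℤ (FreeGroup (Fin m))) =
        1 + ∑ j : Fin m,
          d j * (MonoidAlgebra.of ℤ (FreeGroup (Fin m)) (FreeGroup.of j) - 1) := by
  have ex : ∀ g : FreeGroup (Fin m), ∃ d : Fin m → MonoidAlgebra ℤ (FreeGroup (Fin m)),
      MonoidAlgebra.of ℤ (FreeGroup (Fin m)) g = 1 + ∑ j : Fin m,
        d j * (MonoidAlgebra.of ℤ (FreeGroup (Fin m)) (FreeGroup.of j) - 1) := by
    intro g
    set o : FreeGroup (Fin m) →* MonoidAlgebra ℤ (FreeGroup (Fin m)) :=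
      MonoidAlgebra.of ℤ (FreeGroup (Fin m)) with ho
    induction g using FreeGroup.induction_on with
    | C1 => exact ⟨0, by simp⟩
    | of i =>
      refine ⟨(Pi.single i 1 : Fin m → MonoidAlgebra ℤ (FreeGroup (Fin m))), ?_⟩
      show o (FreeGroup.of i) = _
      have h1 : ∀ j : Fin m,
          (Pi.single i 1 : Fin m → MonoidAlgebra ℤ (FreeGroup (Fin m))) j * (o (FreeGroup.of j) - 1)
          = if j = i then (o (FreeGroup.of j) - 1) else 0 := by
        intro j; by_cases h : j = i <;> simp [Pi.single_apply, h]
      rw [Finset.sum_congr rfl fun j _ => h1 j, Finset.sum_ite_eq' Finset.univ i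
        (fun j => o (FreeGroup.of j) - 1)]
      simp
    | inv_of i ih =>
      obtain ⟨d, hd⟩ := ih
      have hd : o (FreeGroup.of i) = 1 + ∑ j : Fin m, d j * (o (FreeGroup.of j) - 1) := hd
      refine ⟨fun j => -(o (FreeGroup.of i)⁻¹) * d j, ?_⟩
      show o (FreeGroup.of i)⁻¹ = _
      set u : FreeGroup (Fin m) := FreeGroup.of i with hu
      have h1 : o u⁻¹ - 1 = -(o u⁻¹) * (o u - 1) := by
        rw [neg_mul, mul_sub, mul_one, ← map_mul, inv_mul_cancel, map_one, neg_sub]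
      have h2 : o u - 1 = ∑ j : Fin m, d j * (o (FreeGroup.of j) - 1) := by
        rw [hd]; abel
      calc o u⁻¹ = 1 + (o u⁻¹ - 1) := by abel
        _ = 1 + ∑ j : Fin m, (-(o u⁻¹) * d j) * (o (FreeGroup.of j) - 1) := by
            rw [h1, h2, Finset.mul_sum]
            simp [mul_assoc]
    | mul u v ihu ihv =>
      obtain ⟨du, hdu⟩ := ihu
      obtain ⟨dv, hdv⟩ := ihv
      refine ⟨fun j => du j + o u * dv j, ?_⟩
      have h3 : o (u * v) = o u + ∑ j : Fin m, o u * dv j * (o (FreeGroup.of j) - 1) := by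
        rw [map_mul, hdv, mul_add, mul_one, Finset.mul_sum]
        simp [mul_assoc]
      rw [h3]
      simp only [add_mul]
      rw [Finset.sum_add_distrib, ← add_assoc, ← hdu]
  obtain ⟨d, hd⟩ := ex f
  refine ⟨d, hd, ?_⟩
  intro d' hd'
  funext j
  have key : ∀ e : Fin m → MonoidAlgebra ℤ (FreeGroup (Fin m)),
      FoxAux.Delta m j (1 + ∑ i : Fin m,
          e i * (MonoidAlgebra.of ℤ (FreeGroup (Fin m)) (FreeGroup.of i) - 1))
        = FoxAux.Delta m j 1 + e j := by
    intro e
    rw [map_add, map_sum]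
    congr 1
    rw [Finset.sum_congr rfl fun i _ => FoxAux.Delta_mul m j i (e i)]
    simp
  have h4 : FoxAux.Delta m j 1 + d' j = FoxAux.Delta m j 1 + d j := by
    rw [← key d', ← key d, ← hd, ← hd']
  exact add_left_cancel h4
end

section
/- Let n ≥ 2 and let R = ℤ[ℤ^n] be the group ring of the free abelian group ℤ^n over ℤ (equivalently, the Laurent polynomial ring ℤ[x₁^{±1}, …, x_n^{±1}]). If an element d ∈ R divides g − 1 for every g ∈ ℤ^n (where g denotes the corresponding monomial basis element of R and 1 the identity monomial), then d is a unit of R. Equivalently, the greatest common divisor of the augmentation ideal of R is 1. -/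
open AddMonoidAlgebra

private lemma single_sub_one_dvd_nsmul {G : Type*} [AddCommGroup G] (g : G) (k : ℕ) :
    (AddMonoidAlgebra.single g (1 : ℤ) - 1) ∣
      (AddMonoidAlgebra.single (k • g) (1 : ℤ) - 1 : AddMonoidAlgebra ℤ G) := by
  induction k with
  | zero => simp [AddMonoidAlgebra.one_def]
  | succ m ih =>
    have h : (AddMonoidAlgebra.single ((m+1) • g) (1 : ℤ) - 1 : AddMonoidAlgebra ℤ G)
        = AddMonoidAlgebra.single (m • g) (1 : ℤ) * (AddMonoidAlgebra.single g 1 - 1)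
          + (AddMonoidAlgebra.single (m • g) (1 : ℤ) - 1) := by
      rw [mul_sub, AddMonoidAlgebra.single_mul_single, ← succ_nsmul, mul_one]
      ring
    rw [h]
    exact dvd_add (Dvd.intro_left _ rfl) ih

private lemma single_sub_one_dvd_zsmul {G : Type*} [AddCommGroup G] (g : G) (k : ℤ) :
    (AddMonoidAlgebra.single g (1 : ℤ) - 1) ∣
      (AddMonoidAlgebra.single (k • g) (1 : ℤ) - 1 : AddMonoidAlgebra ℤ G) := by
  rcases le_or_gt 0 k with hk | hk
  · obtain ⟨m, rfl⟩ := Int.eq_ofNat_of_zero_le hk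
    simpa [natCast_zsmul] using single_sub_one_dvd_nsmul g m
  · obtain ⟨m, rfl⟩ : ∃ m : ℕ, k = -(m : ℤ) := ⟨k.natAbs, by omega⟩
    have h : (AddMonoidAlgebra.single ((-(m:ℤ)) • g) (1 : ℤ) - 1 : AddMonoidAlgebra ℤ G)
        = -(AddMonoidAlgebra.single ((-(m:ℤ)) • g) (1 : ℤ))
            * (AddMonoidAlgebra.single (m • g) (1 : ℤ) - 1) := by
      rw [neg_mul, mul_sub, AddMonoidAlgebra.single_mul_single]
      have h0 : (-(m:ℤ)) • g + m • g = 0 := by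
        rw [← natCast_zsmul g m, ← add_zsmul]; simp
      rw [h0, mul_one, mul_one, ← AddMonoidAlgebra.one_def]
      ring
    rw [h]
    exact Dvd.dvd.mul_left (single_sub_one_dvd_nsmul g m) _


/-- In the group ring `R = ℤ[ℤ^n]` with `n ≥ 2`, any common divisor of all the
elements `g - 1` (for `g ∈ ℤ^n`) is a unit: the gcd of the augmentation ideal is 1. -/
theorem gcd_augmentation_ideal_is_one {n : ℕ} (hn : 2 ≤ n)
    (d : AddMonoidAlgebra ℤ (Fin n → ℤ))
    (hd : ∀ g : Fin n → ℤ,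
      d ∣ (AddMonoidAlgebra.single g (1 : ℤ) - 1 : AddMonoidAlgebra ℤ (Fin n → ℤ))) :
    IsUnit d := by
  classical
  let i0 : Fin n := ⟨0, by omega⟩
  let i1 : Fin n := ⟨1, by omega⟩
  have hi01 : i1 ≠ i0 := by simp [i0, i1, Fin.ext_iff]
  set e0 : Fin n → ℤ := Pi.single i0 1 with he0def
  set e1 : Fin n → ℤ := Pi.single i1 1 with he1def
  let σ : (Fin n → ℤ) →+ (Fin n → ℤ) :=
    { toFun := fun g => Function.update g i0 0
      map_zero' := by
        funext i; by_cases h : i = i0 <;> simp [Function.update_apply, h]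
      map_add' := by
        intro a b; funext i
        by_cases h : i = i0 <;> simp [Function.update_apply, h] }
  let π : AddMonoidAlgebra ℤ (Fin n → ℤ) →+* AddMonoidAlgebra ℤ (Fin n → ℤ) :=
    AddMonoidAlgebra.mapDomainRingHom ℤ σ
  have hπsingle : ∀ (g : Fin n → ℤ) (c : ℤ),
      π (AddMonoidAlgebra.single g c) = AddMonoidAlgebra.single (σ g) c := by
    intro g c
    exact AddMonoidAlgebra.mapDomain_single
  have hσdecomp : ∀ g : Fin n → ℤ, σ g + (g i0) • e0 = g := by
    intro g; funext i
    by_cases h : i = i0 <;>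
      simp [σ, he0def, Function.update_apply, Pi.single_apply, h]
  have claimA : ∀ f : AddMonoidAlgebra ℤ (Fin n → ℤ),
      (AddMonoidAlgebra.single e0 (1:ℤ) - 1) ∣ (f - π f) := by
    intro f
    induction f using AddMonoidAlgebra.induction with
    | zero => simp
    | single_add a b f _ _ ih =>
      have hf' : ∃ f' : AddMonoidAlgebra ℤ (Fin n → ℤ), f' = f := ⟨f, rfl⟩
      obtain ⟨f', rfl⟩ := hf'
      have key : (AddMonoidAlgebra.single a b + f')
            - π (AddMonoidAlgebra.single a b + f')
          = (AddMonoidAlgebra.single (σ a) b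
            * (AddMonoidAlgebra.single ((a i0) • e0) (1:ℤ) - 1)) + (f' - π f') := by
        rw [map_add, hπsingle, mul_sub, AddMonoidAlgebra.single_mul_single,
          mul_one, mul_one, hσdecomp a]
        ring
      show (AddMonoidAlgebra.single e0 (1:ℤ) - 1) ∣
        (AddMonoidAlgebra.single a b + f') - π (AddMonoidAlgebra.single a b + f')
      rw [key]
      exact dvd_add (Dvd.dvd.mul_left (single_sub_one_dvd_zsmul e0 (a i0)) _) ih
  have hσe0 : σ e0 = 0 := by
    funext i; by_cases h : i = i0 <;>
      simp [σ, he0def, Function.update_apply, Pi.single_apply, h]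
  have hσe1 : σ e1 = e1 := by
    funext i; by_cases h : i = i0 <;>
      simp [σ, he1def, Function.update_apply, Pi.single_apply, h, hi01]
  have hx : π (AddMonoidAlgebra.single e0 (1:ℤ) - 1) = 0 := by
    rw [map_sub, hπsingle, hσe0, map_one, ← AddMonoidAlgebra.one_def, sub_self]
  have hy : π (AddMonoidAlgebra.single e1 (1:ℤ) - 1)
      = AddMonoidAlgebra.single e1 (1:ℤ) - 1 := by
    rw [map_sub, hπsingle, hσe1, map_one]
  have hne : ∀ g : Fin n → ℤ, g ≠ 0 →
      (AddMonoidAlgebra.single g (1:ℤ) - 1 : AddMonoidAlgebra ℤ (Fin n → ℤ)) ≠ 0 := by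
    intro g hg h
    have h2 : (AddMonoidAlgebra.single g (1:ℤ) : AddMonoidAlgebra ℤ (Fin n → ℤ))
        = AddMonoidAlgebra.single 0 1 := by
      rw [← AddMonoidAlgebra.one_def]; exact sub_eq_zero.mp h
    have h3 : (Finsupp.single g (1:ℤ) : (Fin n → ℤ) →₀ ℤ) = Finsupp.single 0 1 := congrArg AddMonoidAlgebra.coeff h2
    rcases (Finsupp.single_eq_single_iff _ _ _ _).mp h3 with ⟨hg0, _⟩ | ⟨h10, _⟩
    · exact hg hg0
    · exact one_ne_zero h10
  have he1 : e1 ≠ 0 := by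
    intro h
    have := congr_fun h i1
    simp [he1def, Pi.single_apply] at this
  have he0 : e0 ≠ 0 := by
    intro h
    have := congr_fun h i0
    simp [he0def, Pi.single_apply] at this
  obtain ⟨a, ha⟩ := hd e0
  obtain ⟨b, hb⟩ := hd e1
  have h2 : π d * π a = 0 := by rw [← map_mul, ← ha, hx]
  rcases mul_eq_zero.mp h2 with hπd | hπa
  · exfalso
    have h3 : π (AddMonoidAlgebra.single e1 (1:ℤ) - 1) = π d * π b := by
      rw [← map_mul, ← hb]
    rw [hy, hπd, zero_mul] at h3
    exact hne e1 he1 h3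
  · obtain ⟨t, ht⟩ : (AddMonoidAlgebra.single e0 (1:ℤ) - 1 :
        AddMonoidAlgebra ℤ (Fin n → ℤ)) ∣ a := by
      simpa [hπa] using claimA a
    have h4 : (AddMonoidAlgebra.single e0 (1:ℤ) - 1 :
        AddMonoidAlgebra ℤ (Fin n → ℤ)) * (1 - d * t) = 0 := by
      have h5 := ha
      rw [ht] at h5
      calc (AddMonoidAlgebra.single e0 (1:ℤ) - 1 :
              AddMonoidAlgebra ℤ (Fin n → ℤ)) * (1 - d * t)
          = (AddMonoidAlgebra.single e0 (1:ℤ) - 1)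
            - d * ((AddMonoidAlgebra.single e0 (1:ℤ) - 1) * t) := by ring
        _ = 0 := by rw [← h5]; ring
    rcases mul_eq_zero.mp h4 with h5 | h5
    · exact absurd h5 (hne e0 he0)
    · exact IsUnit.of_mul_eq_one (a := d) t (by linear_combination -h5)
end

section
/- Let c : ℤ^n → ℂ be a finitely supported function with nonempty support S, and let s : ℤ^n → ℤ be a group homomorphism that is injective on S (i.e. s(g) ≠ s(g') for distinct g, g' ∈ S). Then the Laurent polynomial p = Σ_{g ∈ S} c(g) · t^{s(g)} ∈ ℂ[t^{±1}] is nonzero, and span(p) = max_{g, g' ∈ S} |s(g) − s(g')|. -/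
/-- The span of a Laurent polynomial: the difference between the largest and the
smallest exponent occurring in it (and `0` for the zero polynomial). -/
noncomputable def laurentSpan (p : LaurentPolynomial ℂ) : ℤ :=
  if h : p.coeff.support.Nonempty then p.coeff.support.max' h - p.coeff.support.min' h else 0

lemma sup'_abs_sub {α : Type*} {S : Finset α} (hS : S.Nonempty) (f : α → ℤ) :
    (S ×ˢ S).sup' (hS.product hS) (fun p => |f p.1 - f p.2|) =
      S.sup' hS f - S.inf' hS f := by
  apply le_antisymm
  · apply Finset.sup'_le
    rintro ⟨a, b⟩ hab
    rw [Finset.mem_product] at hab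
    dsimp only
    rw [abs_le]
    constructor
    · have h1 : f b ≤ S.sup' hS f := Finset.le_sup' f hab.2
      have h2 : S.inf' hS f ≤ f a := Finset.inf'_le f hab.1
      omega
    · have h1 : f a ≤ S.sup' hS f := Finset.le_sup' f hab.1
      have h2 : S.inf' hS f ≤ f b := Finset.inf'_le f hab.2
      omega
  · obtain ⟨a, ha, hfa⟩ := Finset.exists_mem_eq_sup' hS f
    obtain ⟨b, hb, hfb⟩ := Finset.exists_mem_eq_inf' hS f
    calc S.sup' hS f - S.inf' hS f = f a - f b := by rw [hfa, hfb]
    _ ≤ |f a - f b| := le_abs_self _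
    _ ≤ (S ×ˢ S).sup' (hS.product hS) (fun p => |f p.1 - f p.2|) := by
      have h := Finset.le_sup' (s := S ×ˢ S) (fun p : α × α => |f p.1 - f p.2|)
        (Finset.mk_mem_product ha hb)
      exact h

/-- If `c : ℤ^n → ℂ` is finitely supported with nonempty support `S` and the
homomorphism `s : ℤ^n → ℤ` is injective on `S`, then the Laurent polynomial
`p = ∑_{g ∈ S} c(g)·t^{s(g)}` is nonzero and its span equals
`max_{g, g' ∈ S} |s(g) - s(g')|`. -/
theorem span_of_regular_specialization {n : ℕ} (c : (Fin n → ℤ) →₀ ℂ)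
    (hc : c.support.Nonempty) (s : (Fin n → ℤ) →+ ℤ)
    (hreg : ∀ g ∈ c.support, ∀ g' ∈ c.support, g ≠ g' → s g ≠ s g') :
    (∑ g ∈ c.support, LaurentPolynomial.C (c g) * LaurentPolynomial.T (s g)) ≠ 0 ∧
    laurentSpan (∑ g ∈ c.support, LaurentPolynomial.C (c g) * LaurentPolynomial.T (s g)) =
      (c.support ×ˢ c.support).sup' (hc.product hc) (fun p => |s p.1 - s p.2|) := by
  classical
  set p := ∑ g ∈ c.support, LaurentPolynomial.C (c g) * LaurentPolynomial.T (s g) with hp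
  have hrw : p.coeff = ∑ g ∈ c.support.attach,
      Finsupp.single (s g.1) (c g.1) := by
    rw [hp, ← Finset.sum_attach c.support (fun g => LaurentPolynomial.C (c g) * LaurentPolynomial.T (s g))]
    rw [AddMonoidAlgebra.coeff_sum]
    exact Finset.sum_congr rfl fun g _ => by rw [← LaurentPolynomial.single_eq_C_mul_T, AddMonoidAlgebra.coeff_single]
  have hsupp : p.coeff.support = c.support.image s := by
    rw [hrw, Finsupp.support_sum_eq_biUnion]
    · ext k
      simp only [Finset.mem_biUnion, Finset.mem_attach, true_and, Subtype.exists,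
        Finset.mem_image]
      constructor
      · rintro ⟨a, ha, hk⟩
        rw [Finsupp.support_single_ne_zero _ (by simpa using Finsupp.mem_support_iff.mp ha)] at hk
        exact ⟨a, ha, (Finset.mem_singleton.mp hk).symm⟩
      · rintro ⟨a, ha, hk⟩
        refine ⟨a, ha, ?_⟩
        rw [Finsupp.support_single_ne_zero _ (by simpa using Finsupp.mem_support_iff.mp ha)]
        exact Finset.mem_singleton.mpr hk.symm
    · rintro ⟨a, ha⟩ ⟨b, hb⟩ hne
      have hab : a ≠ b := fun h => hne (by simp [h])
      have := hreg a ha b hb hab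
      rw [Finsupp.support_single_ne_zero _ (by simpa using Finsupp.mem_support_iff.mp ha),
        Finsupp.support_single_ne_zero _ (by simpa using Finsupp.mem_support_iff.mp hb)]
      simpa using this
  have hne : p.coeff.support.Nonempty := by
    rw [hsupp]; exact hc.image s
  refine ⟨fun h0 => by simp [h0] at hne, ?_⟩
  rw [laurentSpan, dif_pos hne, sup'_abs_sub hc (fun g => s g)]
  congr 1
  · rw [Finset.max'_eq_sup']
    simp_rw [hsupp]
    rw [Finset.sup'_image]
    rfl
  · rw [Finset.min'_eq_inf']
    simp_rw [hsupp]
    rw [Finset.inf'_image]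
    rfl
end

section
/- Let n ≥ 1, let w : {1, …, n} → ℕ, and let A be an n × n matrix over ℂ[t^{±1}] such that each entry in the j-th column has the form a + b·t^{w_j} with a, b ∈ ℂ (a, b depending on the entry). Then there exists an ordinary polynomial P ∈ ℂ[t] with deg P ≤ Σ_{j=1}^n w_j such that det A equals the image of P in ℂ[t^{±1}]. In particular, if det A ≠ 0 then span(det A) ≤ Σ_{j=1}^n w_j. -/
/-- Determinant estimate: if each entry of the `j`-th column of the `n × n`
matrix `A` over `ℂ[t^{±1}]` has the form `a + b·t^{wⱼ}` with `a, b ∈ ℂ`, then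
`det A` is (the image of) an ordinary polynomial of degree at most `∑ⱼ wⱼ`;
in particular, if `det A ≠ 0` then `span(det A) ≤ ∑ⱼ wⱼ`. -/
theorem det_span_estimate {n : ℕ} (hn : 1 ≤ n) (w : Fin n → ℕ)
    (A : Matrix (Fin n) (Fin n) (LaurentPolynomial ℂ))
    (hA : ∀ i j, ∃ a b : ℂ,
      A i j = LaurentPolynomial.C a + LaurentPolynomial.C b * LaurentPolynomial.T (w j)) :
    (∃ P : Polynomial ℂ, P.natDegree ≤ ∑ j, w j ∧ A.det = Polynomial.toLaurent P) ∧
    (A.det ≠ 0 → laurentSpan A.det ≤ ∑ j, w j) := by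
  -- choose polynomial entries
  choose a b hab using hA
  set B : Matrix (Fin n) (Fin n) (Polynomial ℂ) :=
    fun i j => Polynomial.C (a i j) + Polynomial.C (b i j) * Polynomial.X ^ (w j) with hB
  have hmap : A = B.map (Polynomial.toLaurent) := by
    ext i j : 1
    show A i j = Polynomial.toLaurent (B i j)
    simp [hB, hab i j, Matrix.map_apply, map_add, map_mul, Polynomial.toLaurent_C,
      Polynomial.toLaurent_X_pow]
  have hdet : A.det = Polynomial.toLaurent B.det := by
    rw [hmap]; exact (RingHom.map_det (Polynomial.toLaurent : Polynomial ℂ →+* LaurentPolynomial ℂ) B).symm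
  have hBdeg : ∀ i j, (B i j).natDegree ≤ w j := by
    intro i j
    show (Polynomial.C (a i j) + Polynomial.C (b i j) * Polynomial.X ^ (w j)).natDegree ≤ w j
    compute_degree
  have hdeg : B.det.natDegree ≤ ∑ j, w j := by
    rw [Matrix.det_apply']
    refine Polynomial.natDegree_sum_le_of_forall_le _ _ (fun σ _ => ?_)
    refine (Polynomial.natDegree_mul_le).trans ?_
    rw [Polynomial.natDegree_intCast, zero_add]
    refine (Polynomial.natDegree_prod_le _ _).trans ?_
    exact Finset.sum_le_sum fun j _ => hBdeg (σ j) j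
  refine ⟨⟨B.det, hdeg, hdet⟩, ?_⟩
  intro hne
  have hsupp : A.det.coeff.support = B.det.support.map Nat.castEmbedding := by
    rw [hdet, LaurentPolynomial.support_coeff_toLaurent]
  unfold laurentSpan
  have hns : A.det.coeff.support.Nonempty := by
    rw [Finsupp.support_nonempty_iff]; simpa using hne
  rw [dif_pos hns]
  have hmax : A.det.coeff.support.max' hns ≤ (B.det.natDegree : ℤ) := by
    apply Finset.max'_le
    intro y hy
    rw [hsupp, Finset.mem_map] at hy
    obtain ⟨m, hm, rfl⟩ := hy
    have : m ≤ B.det.natDegree := Polynomial.le_natDegree_of_mem_supp m hm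
    simpa [Nat.castEmbedding] using Int.ofNat_le.mpr this
  have hmin : (0 : ℤ) ≤ A.det.coeff.support.min' hns := by
    apply Finset.le_min'
    intro y hy
    rw [hsupp, Finset.mem_map] at hy
    obtain ⟨m, _, hm⟩ := hy
    simp [← hm, Nat.castEmbedding]
  have : (B.det.natDegree : ℤ) ≤ (∑ j, w j : ℕ) := by exact_mod_cast hdeg
  push_cast at this ⊢
  omega
end

section
/- Let Λ = ℂ[t^{±1}] and let A be an n × n matrix over Λ with det A ≠ 0. Then the cokernel Λ^n / A·Λ^n of the Λ-linear map Λ^n → Λ^n given by multiplication by A is a finite-dimensional complex vector space of dimension dim_ℂ (Λ^n / A·Λ^n) = span(det A). -/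
open LaurentPolynomial Polynomial

namespace CokerAux

local notation "Λ" => LaurentPolynomial ℂ

instance : IsDomain Λ := NoZeroDivisors.to_isDomain _

lemma laurentSpan_nonneg (p : Λ) : 0 ≤ laurentSpan p := by
  unfold laurentSpan
  split
  · next h => exact sub_nonneg.mpr (Finset.min'_le _ _ (Finset.max'_mem _ h))
  · exact le_refl 0

private lemma span_support_eq {p : Λ} {s : Finset ℤ} (h : p.coeff.support = s)
    (hs : s.Nonempty) : laurentSpan p = s.max' hs - s.min' hs := by
  subst h; unfold laurentSpan; rw [dif_pos hs]

lemma laurentSpan_T_mul (p : Λ) (n : ℤ) : laurentSpan (p * T n) = laurentSpan p := by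
  rcases eq_or_ne p 0 with rfl | hp
  · simp
  have hT : (T n : Λ) = AddMonoidAlgebra.single n (1 : ℂ) := rfl
  have hs : (p * T n).coeff.support = p.coeff.support.map (addRightEmbedding n) := by
    rw [hT]
    exact AddMonoidAlgebra.support_coeff_mul_single p 1 (by simp) n
  have hps : p.coeff.support.Nonempty :=
    Finsupp.support_nonempty_iff.mpr (by rwa [Ne, AddMonoidAlgebra.coeff_eq_zero])
  have hmap : p.coeff.support.map (addRightEmbedding n) = p.coeff.support.image (· + n) := by
    rw [Finset.map_eq_image]
    rfl
  have hss : (p * T n).coeff.support = p.coeff.support.image (· + n) := hs.trans hmap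
  have hne : (p.coeff.support.image (· + n)).Nonempty := hps.image _
  rw [span_support_eq hss hne,
    Finset.max'_image (fun a b hab => by dsimp only; omega : Monotone (· + n)) _ hne,
    Finset.min'_image (fun a b hab => by dsimp only; omega : Monotone (· + n)) _ hne]
  unfold laurentSpan
  rw [dif_pos hps]
  ring

lemma laurentSpan_toLaurent {q : ℂ[X]} (h0 : q.coeff 0 ≠ 0) :
    laurentSpan (toLaurent q) = q.natDegree := by
  have hq : q ≠ 0 := fun h => h0 (by simp [h])
  have hs : (toLaurent q).coeff.support = q.support.map Nat.castEmbedding := support_coeff_toLaurent q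
  have hmap : q.support.map Nat.castEmbedding = q.support.image (fun k : ℕ => (k : ℤ)) := by
    rw [Finset.map_eq_image]; rfl
  have hqs : q.support.Nonempty := Polynomial.nonempty_support_iff.mpr hq
  have hne : (toLaurent q).coeff.support.Nonempty := by
    rw [hs, hmap]; exact hqs.image _
  have h0mem : (0 : ℕ) ∈ q.support := Polynomial.mem_support_iff.mpr h0
  have hsmin : q.support.min' hqs = 0 :=
    Nat.le_antisymm (Finset.min'_le _ _ h0mem) (Nat.zero_le _)
  have hss : (toLaurent q).coeff.support = q.support.image (fun k : ℕ => (k : ℤ)) :=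
    hs.trans hmap
  have hne' : (q.support.image (fun k : ℕ => (k : ℤ))).Nonempty := hqs.image _
  rw [span_support_eq hss hne',
    Finset.max'_image (fun a b hab => by dsimp only; exact_mod_cast hab : Monotone (fun k : ℕ => (k : ℤ))) _ hne',
    Finset.min'_image (fun a b hab => by dsimp only; exact_mod_cast hab : Monotone (fun k : ℕ => (k : ℤ))) _ hne',
    hsmin, natDegree_eq_support_max' hq]
  simp

lemma exists_reduce (p : Λ) (hp : p ≠ 0) :
    ∃ (q : ℂ[X]) (m : ℤ), q.coeff 0 ≠ 0 ∧ p = toLaurent q * T m ∧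
      laurentSpan p = q.natDegree := by
  obtain ⟨n, f', hf⟩ := exists_T_pow p
  have hf0 : f' ≠ 0 := by
    rintro rfl
    rw [map_zero] at hf
    rcases mul_eq_zero.mp hf.symm with h | h
    · exact hp h
    · exact (isUnit_T (n : ℤ)).ne_zero h
  obtain ⟨r, hr, hnd⟩ := f'.exists_eq_pow_rootMultiplicity_mul_and_not_dvd hf0 0
  rw [map_zero, sub_zero] at hr hnd
  set k := f'.rootMultiplicity 0 with hk
  have h0 : r.coeff 0 ≠ 0 := fun h => hnd (Polynomial.X_dvd_iff.mpr h)
  have hpeq : p = toLaurent r * T ((k : ℤ) - n) := by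
    have h1 : p = toLaurent f' * T (-(n : ℤ)) := by
      rw [hf, mul_T_assoc]
      simp
    rw [h1, hr, map_mul, map_pow, Polynomial.toLaurent_X, T_pow, mul_one,
      mul_comm (T (k : ℤ)) (toLaurent r), mul_T_assoc]
    ring_nf
  refine ⟨r, (k : ℤ) - n, h0, hpeq, ?_⟩
  rw [hpeq, laurentSpan_T_mul, laurentSpan_toLaurent h0]

lemma laurentSpan_mul {p q : Λ} (hp : p ≠ 0) (hq : q ≠ 0) :
    laurentSpan (p * q) = laurentSpan p + laurentSpan q := by
  obtain ⟨a, m, ha, hpa, hsa⟩ := exists_reduce p hp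
  obtain ⟨b, k, hb, hqb, hsb⟩ := exists_reduce q hq
  have ha0 : a ≠ 0 := fun h => ha (by simp [h])
  have hb0 : b ≠ 0 := fun h => hb (by simp [h])
  have hab : (a * b).coeff 0 ≠ 0 := by
    rw [Polynomial.mul_coeff_zero]
    exact mul_ne_zero ha hb
  have hpq : p * q = toLaurent (a * b) * T (m + k) := by
    rw [hpa, hqb, map_mul]
    rw [show toLaurent a * T m * (toLaurent b * T k)
        = toLaurent a * toLaurent b * T m * T k by ring, mul_T_assoc]
  rw [hpq, laurentSpan_T_mul, laurentSpan_toLaurent hab, hsa, hsb,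
    Polynomial.natDegree_mul ha0 hb0]
  push_cast
  ring

lemma laurentSpan_one : laurentSpan (1 : Λ) = 0 := by
  have h : (1 : Λ) = toLaurent (1 : ℂ[X]) := by simp
  rw [h, laurentSpan_toLaurent (by simp)]
  simp

lemma laurentSpan_isUnit {u : Λ} (hu : IsUnit u) : laurentSpan u = 0 := by
  obtain ⟨v, hv⟩ := isUnit_iff_exists_inv.mp hu
  have hu0 : u ≠ 0 := fun h => by simp [h] at hv
  have hv0 : v ≠ 0 := fun h => by simp [h] at hv
  have := laurentSpan_mul hu0 hv0
  rw [hv, laurentSpan_one] at this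
  have h1 := laurentSpan_nonneg u
  have h2 := laurentSpan_nonneg v
  omega

lemma laurentSpan_prod {ι : Type*} (s : Finset ι) (g : ι → Λ)
    (h : ∀ i ∈ s, g i ≠ 0) :
    laurentSpan (∏ i ∈ s, g i) = ∑ i ∈ s, laurentSpan (g i) := by
  classical
  induction s using Finset.cons_induction with
  | empty => simpa using laurentSpan_one
  | cons i s his ih =>
    rw [Finset.prod_cons, Finset.sum_cons,
      laurentSpan_mul (h i (Finset.mem_cons_self i s))
        (Finset.prod_ne_zero_iff.mpr fun j hj => h j (Finset.mem_cons_of_mem hj)),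
      ih fun j hj => h j (Finset.mem_cons_of_mem hj)]


instance : IsPrincipalIdealRing Λ := by
  constructor
  intro I
  obtain ⟨g, hg⟩ := (IsPrincipalIdealRing.principal
    (I.comap (Polynomial.toLaurent : ℂ[X] →+* Λ))).principal
  refine ⟨⟨toLaurent g, le_antisymm ?_ ?_⟩⟩
  · intro x hx
    obtain ⟨n, f', hf⟩ := exists_T_pow x
    have hfI : f' ∈ I.comap (Polynomial.toLaurent : ℂ[X] →+* Λ) := by
      simp only [Ideal.mem_comap, RingHom.coe_coe]
      rw [hf]
      exact Ideal.mul_mem_right _ _ hx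
    rw [hg, Ideal.submodule_span_eq, Ideal.mem_span_singleton] at hfI
    obtain ⟨d, hd⟩ := hfI
    rw [Ideal.submodule_span_eq, Ideal.mem_span_singleton]
    refine ⟨toLaurent d * T (-(n : ℤ)), ?_⟩
    have hx' : x = toLaurent f' * T (-(n : ℤ)) := by
      rw [hf, mul_T_assoc]; simp
    rw [hx', hd, map_mul]
    ring
  · rw [Ideal.submodule_span_eq, Ideal.span_le, Set.singleton_subset_iff]
    have : g ∈ I.comap (Polynomial.toLaurent : ℂ[X] →+* Λ) := by
      rw [hg, Ideal.submodule_span_eq]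
      exact Ideal.subset_span rfl
    exact this

lemma quot_dim (c : Λ) (hc : c ≠ 0) :
    FiniteDimensional ℂ (Λ ⧸ (Ideal.span {c} : Ideal Λ)) ∧
    (Module.finrank ℂ (Λ ⧸ (Ideal.span {c} : Ideal Λ)) : ℤ) = laurentSpan c := by
  obtain ⟨q, m, h0, hrep, hspan⟩ := exists_reduce c hc
  have hq : q ≠ 0 := fun h => h0 (by simp [h])
  have hassoc : Associated c (toLaurent q) := by
    refine ⟨(isUnit_T (-m)).unit, ?_⟩
    rw [IsUnit.unit_spec, hrep, mul_T_assoc]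
    simp
  have hI : (Ideal.span {c} : Ideal Λ) = Ideal.span {toLaurent q} :=
    Ideal.span_singleton_eq_span_singleton.mpr hassoc
  rw [hI, hspan]
  set J : Ideal Λ := Ideal.span {toLaurent q} with hJ
  set Φ : ℂ[X] →ₐ[ℂ] Λ ⧸ J := (Ideal.Quotient.mkₐ ℂ J).comp toLaurentAlg with hΦ
  have hΦ_apply : ∀ f : ℂ[X], Φ f = Ideal.Quotient.mk J (toLaurent f) := fun f => rfl
  set c0 : ℂ := q.coeff 0 with hc0
  obtain ⟨r, hrX⟩ : (X : ℂ[X]) ∣ (q - Polynomial.C c0) := by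
    rw [Polynomial.X_dvd_iff]; simp [hc0]
  set w : ℂ[X] := Polynomial.C (-c0⁻¹) * r with hw
  have hqrel : toLaurent q = T 1 * toLaurent r + LaurentPolynomial.C c0 := by
    have h1 := congrArg (toLaurent (R := ℂ)) hrX
    rw [map_mul, Polynomial.toLaurent_X, map_sub, Polynomial.toLaurent_C] at h1
    linear_combination h1
  have hTw : Ideal.Quotient.mk J (T 1) * Φ w = 1 := by
    rw [hΦ_apply]
    have hw' : T 1 * toLaurent w - 1 = LaurentPolynomial.C (-c0⁻¹) * toLaurent q := by
      rw [hw, map_mul, Polynomial.toLaurent_C, hqrel]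
      have : (-c0⁻¹) * c0 = -1 := by
        field_simp
      rw [mul_add, ← map_mul, this]
      ring_nf
      rw [show LaurentPolynomial.C (-1 : ℂ) = -1 by simp]
      ring
    have hmem : T 1 * toLaurent w - 1 ∈ J := by
      rw [hw']
      exact Ideal.mul_mem_left _ _ (Ideal.subset_span rfl)
    have h2 : Ideal.Quotient.mk J (T 1 * toLaurent w - 1) = 0 :=
      (Ideal.Quotient.eq_zero_iff_mem).mpr hmem
    have h3 : Ideal.Quotient.mk J (T 1 * toLaurent w) = 1 := by
      rwa [map_sub, map_one, sub_eq_zero] at h2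
    rw [← map_mul]
    exact h3
  have key : ∀ y : Λ, ∃ f : ℂ[X], Φ f = Ideal.Quotient.mk J y := by
    intro y
    obtain ⟨n, y', hy⟩ := exists_T_pow y
    refine ⟨y' * w ^ n, ?_⟩
    have hT1n : (T 1 : Λ) ^ n = T (n : ℤ) := by
      rw [T_pow]; norm_num
    have h2 : (Ideal.Quotient.mk J (toLaurent y'))
        = Ideal.Quotient.mk J y * (Ideal.Quotient.mk J (T 1)) ^ n := by
      rw [← map_pow, ← map_mul, hT1n, ← hy]
    rw [map_mul, map_pow, hΦ_apply y', h2]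
    calc Ideal.Quotient.mk J y * Ideal.Quotient.mk J (T 1) ^ n * Φ w ^ n
        = Ideal.Quotient.mk J y * (Ideal.Quotient.mk J (T 1) * Φ w) ^ n := by ring
      _ = Ideal.Quotient.mk J y := by rw [hTw]; simp
  have hsurj : Function.Surjective Φ := by
    intro z
    obtain ⟨y, rfl⟩ := Ideal.Quotient.mk_surjective z
    exact key y
  have hker : RingHom.ker Φ = Ideal.span {q} := by
    ext f
    rw [RingHom.mem_ker, hΦ_apply, Ideal.Quotient.eq_zero_iff_mem]
    constructor
    · intro hmem
      rw [hJ, Ideal.mem_span_singleton] at hmem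
      obtain ⟨s, hs⟩ := hmem
      obtain ⟨msz, s', hs'⟩ := exists_T_pow s
      have heq : toLaurent (f * X ^ msz) = toLaurent (q * s') := by
        rw [map_mul, map_mul, Polynomial.toLaurent_X_pow, hs, mul_assoc, ← hs']
      have heq' : f * X ^ msz = q * s' := toLaurent_injective heq
      have hcop : IsCoprime q (X ^ msz : ℂ[X]) := by
        refine IsCoprime.pow_right ?_
        exact ((Polynomial.irreducible_X.coprime_iff_not_dvd).mpr
          (fun h => h0 (Polynomial.X_dvd_iff.mp h))).symm
      rw [Ideal.mem_span_singleton]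
      exact hcop.dvd_of_dvd_mul_right ⟨s', heq'⟩
    · intro hmem
      rw [Ideal.mem_span_singleton] at hmem
      obtain ⟨d, rfl⟩ := hmem
      rw [map_mul]
      exact Ideal.mul_mem_right _ _ (Ideal.subset_span rfl)
  let e : (ℂ[X] ⧸ Ideal.span {q}) ≃ₐ[ℂ] Λ ⧸ J :=
    (Ideal.quotientEquivAlgOfEq ℂ hker.symm).trans
      (Ideal.quotientKerAlgEquivOfSurjective hsurj)
  let pb : PowerBasis ℂ (AdjoinRoot q) := AdjoinRoot.powerBasis hq
  haveI : FiniteDimensional ℂ (AdjoinRoot q) := Module.Finite.of_basis pb.basis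
  let L : AdjoinRoot q ≃ₗ[ℂ] Λ ⧸ J := e.toLinearEquiv
  haveI : FiniteDimensional ℂ (Λ ⧸ J) := Module.Finite.equiv L
  refine ⟨inferInstance, ?_⟩
  have hfr : Module.finrank ℂ (Λ ⧸ J) = Module.finrank ℂ (AdjoinRoot q) :=
    L.finrank_eq.symm
  rw [hfr, PowerBasis.finrank pb, AdjoinRoot.powerBasis_dim]

end CokerAux

open CokerAux

local notation "Λc" => LaurentPolynomial ℂ

set_option maxHeartbeats 1000000 in
/-- For an `n × n` matrix `A` over `Λ = ℂ[t^{±1}]` with `det A ≠ 0`, the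
cokernel `Λⁿ/A·Λⁿ` is a finite-dimensional complex vector space of dimension
`span(det A)`. -/
theorem coker_finrank_eq_span_det {n : ℕ}
    (A : Matrix (Fin n) (Fin n) (LaurentPolynomial ℂ)) (hA : A.det ≠ 0) :
    FiniteDimensional ℂ
      ((Fin n → LaurentPolynomial ℂ) ⧸ LinearMap.range (Matrix.toLin' A)) ∧
    (Module.finrank ℂ
      ((Fin n → LaurentPolynomial ℂ) ⧸ LinearMap.range (Matrix.toLin' A)) : ℤ) =
      laurentSpan A.det := by
  classical
  set φ := Matrix.toLin' A with hφ
  -- injectivity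
  have hinj : Function.Injective φ := by
    rw [← LinearMap.ker_eq_bot, LinearMap.ker_eq_bot']
    intro x hx
    have hx' : A.mulVec x = 0 := by rwa [hφ, Matrix.toLin'_apply] at hx
    have h2 : A.det • x = 0 := by
      have h3 := congrArg A.adjugate.mulVec hx'
      rwa [Matrix.mulVec_mulVec, Matrix.adjugate_mul, Matrix.smul_mulVec,
        Matrix.one_mulVec, Matrix.mulVec_zero] at h3
    funext i
    have h4 := congrFun h2 i
    simp only [Pi.smul_apply, smul_eq_mul, Pi.zero_apply] at h4
    rcases mul_eq_zero.mp h4 with h | h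
    · exact absurd h hA
    · simpa using h
  set N := LinearMap.range φ with hN
  obtain ⟨m, snf⟩ := N.smithNormalForm (Pi.basisFun Λc (Fin n))
  set eN : (Fin n → Λc) ≃ₗ[Λc] N := LinearEquiv.ofInjective φ hinj with heN
  have hmn : n = m := by
    have b2 : Module.Basis (Fin n) Λc N := (Pi.basisFun Λc (Fin n)).map eN
    simpa using Fintype.card_congr (Module.Basis.indexEquiv b2 snf.bN)
  subst hmn
  set σ : Fin n ≃ Fin n :=
    Equiv.ofBijective snf.f (Finite.injective_iff_bijective.mp snf.f.injective) with hσdef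
  have hσ : ∀ i, σ i = snf.f i := fun i => rfl
  have ha : ∀ i, snf.a i ≠ 0 := by
    intro i h
    have h1 := snf.snf i
    rw [h, zero_smul] at h1
    exact snf.bN.ne_zero i (ZeroMemClass.coe_eq_zero.mp h1)
  set c : Fin n → Λc := fun j => snf.a (σ.symm j) with hcdef
  have hc : ∀ j, c j ≠ 0 := fun j => ha _
  -- N as a span
  have hNspan : N = Submodule.span Λc (Set.range fun i => snf.a i • snf.bM (snf.f i)) := by
    have h1 : Submodule.span Λc (Set.range fun i => (snf.bN i : Fin n → Λc)) = N := by
      calc Submodule.span Λc (Set.range fun i => (snf.bN i : Fin n → Λc))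
          = Submodule.map N.subtype (Submodule.span Λc (Set.range snf.bN)) := by
            rw [Submodule.map_span]
            congr 1
            rw [← Set.range_comp]
            rfl
        _ = Submodule.map N.subtype ⊤ := by rw [snf.bN.span_eq]
        _ = N := Submodule.map_subtype_top N
    have h2 : (fun i => (snf.bN i : Fin n → Λc)) = fun i => snf.a i • snf.bM (snf.f i) :=
      funext snf.snf
    exact h1.symm.trans (congrArg (Submodule.span Λc) (congrArg Set.range h2))
  -- image of N under the coordinate equivalence
  have hmap : Submodule.map (snf.bM.equivFun : (Fin n → Λc) →ₗ[Λc] (Fin n → Λc)) N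
      = Submodule.pi Set.univ (fun j => (Ideal.span {c j} : Submodule Λc Λc)) := by
    refine Eq.trans (congrArg (Submodule.map _) hNspan) ?_
    rw [Submodule.map_span]
    have himg : (⇑snf.bM.equivFun '' Set.range fun i => snf.a i • snf.bM (snf.f i))
        = Set.range fun j => Pi.single j (c j) := by
      rw [← Set.range_comp]
      have hfun : (⇑snf.bM.equivFun ∘ fun i => snf.a i • snf.bM (snf.f i))
          = (fun j => Pi.single j (c j)) ∘ σ := by
        funext i
        funext j
        have h1 : snf.bM.equivFun (snf.a i • snf.bM (snf.f i))
            = snf.a i • snf.bM.equivFun (snf.bM (snf.f i)) := map_smul _ _ _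
        simp only [Function.comp_apply]
        rw [h1]
        simp only [Pi.smul_apply, Module.Basis.equivFun_self, smul_eq_mul, hcdef,
          Equiv.symm_apply_apply, Pi.single_apply, ← hσ i]
        by_cases h : σ i = j
        · rw [if_pos h, if_pos h.symm, mul_one]
        · rw [if_neg h, if_neg fun hh => h hh.symm, mul_zero]
      rw [hfun, Set.range_comp, σ.surjective.range_eq, Set.image_univ]
    rw [LinearEquiv.coe_coe, himg]
    apply le_antisymm
    · rw [Submodule.span_le]
      rintro x ⟨j, rfl⟩
      rw [SetLike.mem_coe, Submodule.mem_pi]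
      intro k _
      simp only [Pi.single_apply]
      split_ifs with h
      · subst h
        exact Ideal.subset_span rfl
      · exact Submodule.zero_mem _
    · intro x hx
      rw [Submodule.mem_pi] at hx
      have hx' : ∀ j, ∃ r : Λc, r • c j = x j := by
        intro j
        exact Submodule.mem_span_singleton.mp (hx j (Set.mem_univ j))
      choose r hr using hx'
      have hxe : x = ∑ j, r j • (Pi.single j (c j) : Fin n → Λc) := by
        conv_lhs => rw [← Finset.univ_sum_single x]
        refine Finset.sum_congr rfl fun j _ => ?_
        rw [← hr j]
        exact Pi.single_smul (f := fun _ => Λc) j (r j) (c j)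
      rw [hxe]
      exact Submodule.sum_mem _ fun j _ =>
        Submodule.smul_mem _ _ (Submodule.subset_span ⟨j, rfl⟩)
  -- the quotient equivalence
  let E : ((Fin n → Λc) ⧸ N) ≃ₗ[Λc]
      ((j : Fin n) → Λc ⧸ (Ideal.span {c j} : Submodule Λc Λc)) :=
    (Submodule.Quotient.equiv N _ snf.bM.equivFun hmap).trans (Submodule.quotientPi _)
  let EC : ((Fin n → Λc) ⧸ N) ≃ₗ[ℂ]
      ((j : Fin n) → Λc ⧸ (Ideal.span {c j} : Submodule Λc Λc)) :=
    E.restrictScalars ℂ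
  haveI hFD : ∀ j, FiniteDimensional ℂ (Λc ⧸ (Ideal.span {c j} : Ideal Λc)) :=
    fun j => (quot_dim (c j) (hc j)).1
  haveI : FiniteDimensional ℂ
      ((j : Fin n) → Λc ⧸ (Ideal.span {c j} : Submodule Λc Λc)) := by
    infer_instance
  haveI hQFD : FiniteDimensional ℂ ((Fin n → Λc) ⧸ N) := Module.Finite.equiv EC.symm
  refine ⟨hQFD, ?_⟩
  -- dimension count
  have hdim : (Module.finrank ℂ ((Fin n → Λc) ⧸ N) : ℤ)
      = ∑ i, laurentSpan (snf.a i) := by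
    rw [EC.finrank_eq, Module.finrank_pi_fintype]
    push_cast
    rw [Finset.sum_congr rfl fun j _ => (quot_dim (c j) (hc j)).2]
    exact Equiv.sum_comp σ.symm fun i => laurentSpan (snf.a i)
  rw [hdim]
  -- determinant computation
  have hdet1 : A.det = (LinearMap.toMatrix snf.bM snf.bM φ).det :=
    ((LinearMap.det_toLin' A).symm).trans (LinearMap.det_toMatrix snf.bM φ).symm
  have hcomp : φ = N.subtype.comp (eN : (Fin n → Λc) →ₗ[Λc] N) := by
    apply LinearMap.ext
    intro x
    rw [heN]
    exact (LinearEquiv.ofInjective_apply φ (h := hinj) x).symm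
  have hmat : LinearMap.toMatrix snf.bM snf.bM φ
      = (LinearMap.toMatrix snf.bN snf.bM N.subtype)
        * (LinearMap.toMatrix snf.bM snf.bN (eN : (Fin n → Λc) →ₗ[Λc] N)) := by
    rw [hcomp, LinearMap.toMatrix_comp snf.bM snf.bN snf.bM]
  have hS : LinearMap.toMatrix snf.bN snf.bM N.subtype
      = (Matrix.diagonal snf.a).submatrix σ.symm id := by
    ext k i
    rw [LinearMap.toMatrix_apply, Submodule.coe_subtype]
    rw [snf.snf i, map_smul, Finsupp.smul_apply, snf.bM.repr_self]
    rw [Matrix.submatrix_apply, Matrix.diagonal_apply, id_eq]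
    rw [Finsupp.single_apply]
    by_cases h : σ.symm k = i
    · have h' : snf.f i = k := by rw [← hσ i, ← h, Equiv.apply_symm_apply]
      simp [h, h', smul_eq_mul]
    · have h' : ¬ (snf.f i = k) := by
        rw [← hσ i]
        intro hh
        exact h (by rw [← hh, Equiv.symm_apply_apply])
      simp [h, h', smul_eq_mul]
  have hdetS : ((Matrix.diagonal snf.a).submatrix (⇑σ.symm) id).det
      = ((Equiv.Perm.sign σ.symm : ℤ) : Λc) * ∏ i, snf.a i := by
    rw [Matrix.det_permute σ.symm (Matrix.diagonal snf.a), Matrix.det_diagonal]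
  have hεunit : IsUnit (((Equiv.Perm.sign σ.symm : ℤ) : Λc)) :=
    (Equiv.Perm.sign σ.symm).isUnit.map (Int.castRingHom Λc)
  have hEunit : IsUnit (LinearMap.toMatrix snf.bM snf.bN
      (eN : (Fin n → Λc) →ₗ[Λc] N)).det := eN.isUnit_det snf.bM snf.bN
  have hprod0 : (∏ i, snf.a i) ≠ 0 :=
    Finset.prod_ne_zero_iff.mpr fun i _ => ha i
  have hdetA : A.det = ((Equiv.Perm.sign σ.symm : ℤ) : Λc) * (∏ i, snf.a i)
      * (LinearMap.toMatrix snf.bM snf.bN (eN : (Fin n → Λc) →ₗ[Λc] N)).det := by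
    rw [hdet1, hmat, Matrix.det_mul, hS, hdetS]
  rw [hdetA]
  rw [laurentSpan_mul (mul_ne_zero hεunit.ne_zero hprod0) hEunit.ne_zero,
    laurentSpan_mul hεunit.ne_zero hprod0,
    laurentSpan_isUnit hεunit, laurentSpan_isUnit hEunit,
    laurentSpan_prod Finset.univ snf.a fun i _ => ha i]
  ring
end

section
/- Let f : ℤ^n → ℝ be a function satisfying: f(x) ≥ 0 for all x, f(x + y) ≤ f(x) + f(y) for all x, y ∈ ℤ^n, and f(k·x) = |k|·f(x) for all k ∈ ℤ and x ∈ ℤ^n. Then there exists a unique continuous function g : ℝ^n → ℝ such that g agrees with f on the lattice ℤ^n ⊆ ℝ^n, g(v + w) ≤ g(v) + g(w) for all v, w ∈ ℝ^n, and g(r·v) = |r|·g(v) for all r ∈ ℝ and v ∈ ℝ^n. -/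
namespace LatticeNormExt

variable {n : ℕ}

lemma exists_rep (v : Fin n → ℚ) :
    ∃ (d : ℕ) (x : Fin n → ℤ), 0 < d ∧ ∀ i, (x i : ℚ) = d * v i := by
  refine ⟨∏ i, (v i).den, fun i => (v i).num * ((∏ j, (v j).den) / (v i).den), ?_, ?_⟩
  · exact Finset.prod_pos fun i _ => (v i).pos
  · intro i
    obtain ⟨m, hm⟩ := Finset.dvd_prod_of_mem (fun j => (v j).den) (Finset.mem_univ i)
    simp only [hm]
    have h1 : ((((v i).den * m : ℕ) : ℤ)) / ((v i).den : ℤ) = m := by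
      push_cast
      exact Int.mul_ediv_cancel_left _ (by exact_mod_cast (v i).pos.ne')
    rw [h1]
    push_cast
    have h2 : (v i) * ((v i).den : ℚ) = (v i).num := Rat.mul_den_eq_num _
    linear_combination (-(m : ℚ)) * h2

variable (f : (Fin n → ℤ) → ℝ)

noncomputable def g0 (v : Fin n → ℚ) : ℝ :=
  f (exists_rep v).choose_spec.choose / (exists_rep v).choose

section props

variable (hf_nonneg : ∀ x, 0 ≤ f x)
  (hf_add : ∀ x y, f (x + y) ≤ f x + f y)
  (hf_hom : ∀ (k : ℤ) (x), f (k • x) = |(k : ℝ)| * f x)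

include hf_hom in
lemma f_zero : f 0 = 0 := by simpa using hf_hom 0 0

include hf_hom in
lemma f_neg (x : Fin n → ℤ) : f (-x) = f x := by
  have := hf_hom (-1) x
  simpa using this

include hf_add hf_hom in
lemma f_le (x : Fin n → ℤ) :
    f x ≤ ∑ i, |(x i : ℝ)| * f (Pi.single i 1) := by
  have hx : x = ∑ i, Pi.single i (x i) := (Finset.univ_sum_single x).symm
  calc f x = f (∑ i, Pi.single i (x i)) := by rw [← hx]
    _ ≤ ∑ i, f (Pi.single i (x i)) :=
        Finset.le_sum_of_subadditive f (f_zero f hf_hom).le hf_add _ _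
    _ = ∑ i, |(x i : ℝ)| * f (Pi.single i 1) := by
        refine Finset.sum_congr rfl fun i _ => ?_
        have : Pi.single i (x i) = (x i) • (Pi.single i 1 : Fin n → ℤ) := by
          funext j
          by_cases h : j = i <;> simp [h, Pi.single_apply]
        rw [this, hf_hom]

include hf_nonneg hf_add hf_hom in
lemma f_bound (x : Fin n → ℤ) :
    f x ≤ (∑ i, f (Pi.single i 1)) * ‖(fun i => (x i : ℝ))‖ := by
  refine (f_le f hf_add hf_hom x).trans ?_
  rw [Finset.sum_mul]
  refine Finset.sum_le_sum fun i _ => ?_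
  rw [mul_comm (f _)]
  refine mul_le_mul_of_nonneg_right ?_ (hf_nonneg _)
  simpa using norm_le_pi_norm (fun i => (x i : ℝ)) i

include hf_hom in
lemma well (d₁ d₂ : ℕ) (x₁ x₂ : Fin n → ℤ) (h₁ : 0 < d₁) (h₂ : 0 < d₂)
    (h : (d₂ : ℤ) • x₁ = (d₁ : ℤ) • x₂) : f x₁ / d₁ = f x₂ / d₂ := by
  have e1 := hf_hom (d₂ : ℤ) x₁
  have e2 := hf_hom (d₁ : ℤ) x₂
  rw [h] at e1
  rw [e2] at e1
  have hd₁ : (0:ℝ) < d₁ := by exact_mod_cast h₁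
  have hd₂ : (0:ℝ) < d₂ := by exact_mod_cast h₂
  rw [abs_of_pos (by exact_mod_cast hd₁), abs_of_pos (by exact_mod_cast hd₂)] at e1
  push_cast at e1 ⊢
  field_simp
  linarith [e1]

include hf_hom in
lemma g0_eq (v : Fin n → ℚ) (d : ℕ) (x : Fin n → ℤ) (hd : 0 < d)
    (hx : ∀ i, (x i : ℚ) = d * v i) : g0 f v = f x / d := by
  obtain ⟨hd', hx'⟩ := (exists_rep v).choose_spec.choose_spec
  refine well f hf_hom _ d _ x hd' hd ?_
  funext i
  simp only [Pi.smul_apply, smul_eq_mul]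
  have : ((d : ℚ) * ((exists_rep v).choose_spec.choose i : ℚ))
      = ((exists_rep v).choose : ℚ) * (x i : ℚ) := by
    rw [hx i, hx' i]; ring
  exact_mod_cast this

lemma g0_spec (v : Fin n → ℚ) :
    ∃ (d : ℕ) (x : Fin n → ℤ), 0 < d ∧ (∀ i, (x i : ℚ) = d * v i) ∧ g0 f v = f x / d := by
  obtain ⟨hd, hx⟩ := (exists_rep v).choose_spec.choose_spec
  exact ⟨_, _, hd, hx, rfl⟩

include hf_nonneg in
lemma g0_nonneg (v : Fin n → ℚ) : 0 ≤ g0 f v := by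
  obtain ⟨d, x, hd, _, h⟩ := g0_spec f v
  rw [h]
  exact div_nonneg (hf_nonneg x) (by positivity)

include hf_hom in
lemma g0_int (x : Fin n → ℤ) : g0 f (fun i => (x i : ℚ)) = f x := by
  rw [g0_eq f hf_hom _ 1 x one_pos (fun i => by push_cast; ring)]
  simp

include hf_hom in
lemma g0_neg (v : Fin n → ℚ) : g0 f (-v) = g0 f v := by
  obtain ⟨d, x, hd, hx, h⟩ := g0_spec f v
  rw [h, g0_eq f hf_hom (-v) d (-x) hd (fun i => by simp only [Pi.neg_apply]; push_cast [hx i]; ring),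
    f_neg f hf_hom]

include hf_add hf_hom in
lemma g0_add (v w : Fin n → ℚ) : g0 f (v + w) ≤ g0 f v + g0 f w := by
  obtain ⟨d₁, x₁, hd₁, hx₁, h₁⟩ := g0_spec f v
  obtain ⟨d₂, x₂, hd₂, hx₂, h₂⟩ := g0_spec f w
  have hrep : ∀ i, ((((d₂ : ℤ) • x₁ + (d₁ : ℤ) • x₂) i : ℤ) : ℚ)
      = ((d₁ * d₂ : ℕ) : ℚ) * (v + w) i := by
    intro i
    simp only [Pi.add_apply, Pi.smul_apply, smul_eq_mul]
    push_cast [hx₁ i, hx₂ i]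
    ring
  rw [h₁, h₂, g0_eq f hf_hom (v + w) (d₁ * d₂) _ (Nat.mul_pos hd₁ hd₂) hrep]
  have hD₁ : (0:ℝ) < d₁ := by exact_mod_cast hd₁
  have hD₂ : (0:ℝ) < d₂ := by exact_mod_cast hd₂
  have step := hf_add ((d₂ : ℤ) • x₁) ((d₁ : ℤ) • x₂)
  rw [hf_hom, hf_hom] at step
  have habs₁ : |((d₂:ℤ) : ℝ)| = (d₂:ℝ) := by
    rw [abs_of_pos]; · push_cast; ring
    · exact_mod_cast hD₂
  have habs₂ : |((d₁:ℤ) : ℝ)| = (d₁:ℝ) := by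
    rw [abs_of_pos]; · push_cast; ring
    · exact_mod_cast hD₁
  rw [habs₁, habs₂] at step
  rw [div_add_div _ _ hD₁.ne' hD₂.ne', div_le_div_iff₀ (by positivity) (by positivity)]
  push_cast
  have hmm := mul_le_mul_of_nonneg_right step (le_of_lt (mul_pos hD₁ hD₂))
  nlinarith [hmm]

include hf_hom in
lemma g0_rat_smul (q : ℚ) (v : Fin n → ℚ) :
    g0 f (q • v) = |(q : ℝ)| * g0 f v := by
  obtain ⟨d, x, hd, hx, h⟩ := g0_spec f v
  have hqden : ((q.den : ℚ)) * q = q.num := by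
    rw [mul_comm]; exact Rat.mul_den_eq_num _
  have hrep : ∀ i, (((q.num • x) i : ℤ) : ℚ) = ((d * q.den : ℕ) : ℚ) * (q • v) i := by
    intro i
    simp only [Pi.smul_apply, smul_eq_mul]
    push_cast [hx i]
    linear_combination (-(d : ℚ) * (v i)) * hqden
  rw [h, g0_eq f hf_hom (q • v) (d * q.den) _ (Nat.mul_pos hd q.pos) hrep,
    hf_hom q.num x]
  have hD : (0:ℝ) < d := by exact_mod_cast hd
  have hDen : (0:ℝ) < q.den := by exact_mod_cast q.pos
  have hcast : |(q : ℝ)| = |(q.num : ℝ)| / (q.den : ℝ) := by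
    rw [Rat.cast_def, abs_div, abs_of_pos hDen]
  rw [hcast]
  push_cast
  rw [div_mul_div_comm, mul_comm ((q.den : ℝ)) (d : ℝ)]

include hf_nonneg hf_add hf_hom in
lemma g0_bound (v : Fin n → ℚ) :
    g0 f v ≤ (∑ i, f (Pi.single i 1)) * ‖(fun i => ((v i : ℝ)) : Fin n → ℝ)‖ := by
  obtain ⟨d, x, hd, hx, h⟩ := g0_spec f v
  have hD : (0:ℝ) < d := by exact_mod_cast hd
  have hxr : (fun i => ((x i : ℝ)) : Fin n → ℝ) = (d : ℝ) • fun i => ((v i : ℝ)) := by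
    funext i
    have := hx i
    simp only [Pi.smul_apply, smul_eq_mul]
    exact_mod_cast congrArg (fun t : ℚ => (t : ℝ)) this
  have hb := f_bound f hf_nonneg hf_add hf_hom x
  rw [hxr, norm_smul] at hb
  rw [h, div_le_iff₀ hD]
  calc f x ≤ (∑ i, f (Pi.single i 1)) * (‖(d:ℝ)‖ * ‖(fun i => ((v i : ℝ)) : Fin n → ℝ)‖) := hb
    _ = (∑ i, f (Pi.single i 1)) * ‖(fun i => ((v i : ℝ)) : Fin n → ℝ)‖ * d := by
        rw [Real.norm_eq_abs, abs_of_pos hD]; ring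

end props

end LatticeNormExt

open LatticeNormExt in
theorem main_ext {n : ℕ} (f : (Fin n → ℤ) → ℝ)
    (hf_nonneg : ∀ x, 0 ≤ f x)
    (hf_add : ∀ x y, f (x + y) ≤ f x + f y)
    (hf_hom : ∀ (k : ℤ) (x), f (k • x) = |(k : ℝ)| * f x) :
    ∃! g : (Fin n → ℝ) → ℝ,
      Continuous g ∧
      (∀ x : Fin n → ℤ, g (fun i => (x i : ℝ)) = f x) ∧
      (∀ v w : Fin n → ℝ, g (v + w) ≤ g v + g w) ∧
      (∀ (r : ℝ) (v : Fin n → ℝ), g (r • v) = |r| * g v) := by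
  classical
  set C : ℝ := ∑ i, f (Pi.single i 1) with hC_def
  have hC : 0 ≤ C := Finset.sum_nonneg fun i _ => hf_nonneg _
  set ρ : (Fin n → ℚ) → (Fin n → ℝ) := fun w => fun i => ((w i : ℝ)) with hρ_def
  have hρ_inj : Function.Injective ρ := by
    intro a b hab
    funext i
    have h2 : ((a i : ℝ)) = ((b i : ℝ)) := congrFun hab i
    exact_mod_cast h2
  set s : Set (Fin n → ℝ) := Set.range ρ with hs_def
  -- density
  have hs_eq : s = Set.pi Set.univ (fun _ : Fin n => Set.range ((↑) : ℚ → ℝ)) := by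
    ext v
    constructor
    · rintro ⟨w, rfl⟩ i _
      exact ⟨w i, rfl⟩
    · intro hv
      choose w hw using fun i => hv i (Set.mem_univ i)
      exact ⟨w, funext hw⟩
  have hdense : Dense s := by
    rw [dense_iff_closure_eq, hs_eq, closure_pi_set]
    simp [Rat.denseRange_cast.closure_eq]
  -- partial function
  set F0 : (Fin n → ℝ) → ℝ := fun v =>
    if h : ∃ w : Fin n → ℚ, ρ w = v then g0 f h.choose else 0 with hF0_def
  have hF0 : ∀ w : Fin n → ℚ, F0 (ρ w) = g0 f w := by
    intro w
    have h : ∃ w' : Fin n → ℚ, ρ w' = ρ w := ⟨w, rfl⟩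
    rw [hF0_def]
    simp only [dif_pos h]
    exact congrArg (g0 f) (hρ_inj h.choose_spec)
  -- Lipschitz bound on rationals
  have hsub : ∀ v w : Fin n → ℚ, ρ v - ρ w = ρ (v - w) := by
    intro v w; funext i; simp [hρ_def]
  have hlipQ : ∀ v w : Fin n → ℚ, |g0 f v - g0 f w| ≤ C * ‖ρ v - ρ w‖ := by
    intro v w
    have hbound : g0 f (v - w) ≤ C * ‖ρ (v - w)‖ := g0_bound f hf_nonneg hf_add hf_hom _
    have hvw : g0 f v - g0 f w ≤ g0 f (v - w) := by
      have := g0_add f hf_add hf_hom (v - w) w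
      simp only [sub_add_cancel] at this
      linarith
    have hwv : g0 f w - g0 f v ≤ g0 f (v - w) := by
      have := g0_add f hf_add hf_hom (w - v) v
      simp only [sub_add_cancel] at this
      have hneg : g0 f (w - v) = g0 f (v - w) := by
        rw [show w - v = -(v - w) by ring, g0_neg f hf_hom]
      linarith
    rw [abs_sub_le_iff, hsub]
    exact ⟨hvw.trans hbound, hwv.trans hbound⟩
  have hlip : LipschitzOnWith C.toNNReal F0 s := by
    rw [lipschitzOnWith_iff_dist_le_mul]
    rintro _ ⟨v, rfl⟩ _ ⟨w, rfl⟩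
    rw [hF0, hF0, Real.dist_eq, dist_eq_norm]
    calc |g0 f v - g0 f w| ≤ C * ‖ρ v - ρ w‖ := hlipQ v w
      _ = C.toNNReal * ‖ρ v - ρ w‖ := by rw [Real.coe_toNNReal _ hC]
  obtain ⟨G, hGlip, hGeq⟩ := hlip.extend_real
  have hG : Continuous G := hGlip.continuous
  have hGρ : ∀ w : Fin n → ℚ, G (ρ w) = g0 f w := fun w =>
    (hGeq ⟨w, rfl⟩).symm.trans (hF0 w)
  -- closure argument helper
  have huniv : ∀ t : Set (Fin n → ℝ), IsClosed t → s ⊆ t → ∀ v, v ∈ t := by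
    intro t ht hst v
    have : Set.univ ⊆ t := by
      rw [← hdense.closure_eq]
      exact ht.closure_subset_iff.mpr hst
    exact this (Set.mem_univ v)
  -- lattice values
  have hlat : ∀ x : Fin n → ℤ, G (fun i => (x i : ℝ)) = f x := by
    intro x
    have : (fun i => ((x i : ℝ))) = ρ (fun i => (x i : ℚ)) := by
      funext i; simp [hρ_def]
    rw [this, hGρ, g0_int f hf_hom]
  -- subadditivity
  have hρadd : ∀ v w : Fin n → ℚ, ρ v + ρ w = ρ (v + w) := by
    intro v w; funext i; simp [hρ_def]
  have hadd1 : ∀ v w : Fin n → ℚ, G (ρ v + ρ w) ≤ G (ρ v) + G (ρ w) := by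
    intro v w
    rw [hρadd, hGρ, hGρ, hGρ]
    exact g0_add f hf_add hf_hom v w
  have hadd2 : ∀ (v : Fin n → ℚ) (w : Fin n → ℝ), G (ρ v + w) ≤ G (ρ v) + G w := by
    intro v
    refine huniv {w | G (ρ v + w) ≤ G (ρ v) + G w}
      (isClosed_le (hG.comp (continuous_const.add continuous_id)) (continuous_const.add hG)) ?_
    rintro _ ⟨w, rfl⟩
    exact hadd1 v w
  have hadd : ∀ v w : Fin n → ℝ, G (v + w) ≤ G v + G w := by
    intro v w
    refine huniv {v | G (v + w) ≤ G v + G w}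
      (isClosed_le (hG.comp (continuous_id.add continuous_const)) ((hG).add continuous_const)) ?_ v
    rintro _ ⟨u, rfl⟩
    exact hadd2 u w
  -- homogeneity
  have hρsmul : ∀ (q : ℚ) (w : Fin n → ℚ), (q : ℝ) • ρ w = ρ (q • w) := by
    intro q w; funext i; simp [hρ_def]
  have hhomA : ∀ (q : ℚ) (v : Fin n → ℝ), G ((q : ℝ) • v) = |(q : ℝ)| * G v := by
    intro q
    have hfun : (fun v => G ((q : ℝ) • v)) = fun v => |(q : ℝ)| * G v := by
      refine Continuous.ext_on hdense (hG.comp (continuous_const_smul ((q : ℝ))))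
        (continuous_const.mul hG) ?_
      rintro _ ⟨w, rfl⟩
      show G ((q : ℝ) • ρ w) = |(q : ℝ)| * G (ρ w)
      rw [hρsmul, hGρ, hGρ, g0_rat_smul f hf_hom]
    exact fun v => congrFun hfun v
  have hhom : ∀ (r : ℝ) (v : Fin n → ℝ), G (r • v) = |r| * G v := by
    intro r v
    have hd2 : Dense (Set.range ((↑) : ℚ → ℝ)) := Rat.denseRange_cast
    have hfun : (fun r : ℝ => G (r • v)) = fun r : ℝ => |r| * G v := by
      refine Continuous.ext_on hd2 (hG.comp (continuous_id.smul continuous_const))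
        (continuous_abs.mul continuous_const) ?_
      rintro _ ⟨q, rfl⟩
      exact hhomA q v
    exact congrFun hfun r
  refine ⟨G, ⟨hG, hlat, hadd, hhom⟩, ?_⟩
  rintro g' ⟨hc', hlat', _, hhom'⟩
  refine Continuous.ext_on hdense hc' hG ?_
  rintro _ ⟨w, rfl⟩
  show g' (ρ w) = G (ρ w)
  rw [hGρ]
  obtain ⟨d, x, hd, hx, h⟩ := g0_spec f w
  have hD : (0:ℝ) < d := by exact_mod_cast hd
  have hrw : ρ w = ((d : ℝ))⁻¹ • (fun i => ((x i : ℝ))) := by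
    funext i
    have hxi : ((x i : ℝ)) = d * w i := by exact_mod_cast hx i
    simp only [Pi.smul_apply, smul_eq_mul, hρ_def, hxi]
    field_simp
  rw [hrw, hhom', hlat', h, abs_of_pos (inv_pos.mpr hD)]
  rw [inv_mul_eq_div]


/-- A homogeneous norm on the lattice `ℤ^n` (nonnegative, subadditive, and with
`f(k·x) = |k|·f(x)` for `k ∈ ℤ`) extends uniquely to a continuous homogeneous
norm on `ℝ^n`. -/
theorem lattice_norm_extends_uniquely {n : ℕ} (f : (Fin n → ℤ) → ℝ)
    (hf_nonneg : ∀ x, 0 ≤ f x)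
    (hf_add : ∀ x y, f (x + y) ≤ f x + f y)
    (hf_hom : ∀ (k : ℤ) (x), f (k • x) = |(k : ℝ)| * f x) :
    ∃! g : (Fin n → ℝ) → ℝ,
      Continuous g ∧
      (∀ x : Fin n → ℤ, g (fun i => (x i : ℝ)) = f x) ∧
      (∀ v w : Fin n → ℝ, g (v + w) ≤ g v + g w) ∧
      (∀ (r : ℝ) (v : Fin n → ℝ), g (r • v) = |r| * g v) := by
  exact main_ext f hf_nonneg hf_add hf_hom
end
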